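/- Let H₁, H₂, E be complex Hilbert spaces, let J : E → E be a bounded self-adjoint involution (J = J* and J∘J = I), and let K₁ : E → H₁, K₂ : E → H₂ be bounded operators. Suppose A : H₁ → H₁ and M : H₂ → H₂ are bounded operators satisfying A − A* = 2i·K₁JK₁* and M − M* = 2i·K₂JK₂*. Define the block operator M̂ on H₁ × H₂ by M̂(x₁, x₂) = (A x₁ + 2i·K₁JK₂* x₂, M x₂) and the operator K : E → H₁ × H₂ by K e = (K₁ e, K₂ e). Then M̂ − M̂* = 2i·K J K*. -/

import Mathlib

open ContinuousLinearMap

/-- The state-space operator of an `LF`-coupling: if `A - A* = 2i·K₁JK₁*` and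
`M - M* = 2i·K₂JK₂*`, the block operator
`M̂(x₁, x₂) = (A x₁ + 2i·K₁JK₂* x₂, M x₂)` and the channel operator
`K e = (K₁ e, K₂ e)` satisfy `M̂ - M̂* = 2i·KJK*`. -/
theorem stmt_0
    {H₁ H₂ E : Type*}
    [NormedAddCommGroup H₁] [InnerProductSpace ℂ H₁] [CompleteSpace H₁]
    [NormedAddCommGroup H₂] [InnerProductSpace ℂ H₂] [CompleteSpace H₂]
    [NormedAddCommGroup E] [InnerProductSpace ℂ E] [CompleteSpace E]
    (J : E →L[ℂ] E) (hJsa : adjoint J = J) (hJinv : J ∘L J = 1)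
    (K₁ : E →L[ℂ] H₁) (K₂ : E →L[ℂ] H₂)
    (A : H₁ →L[ℂ] H₁) (M : H₂ →L[ℂ] H₂)
    (hA : A - adjoint A = (2 * Complex.I) • (K₁ ∘L J ∘L adjoint K₁))
    (hM : M - adjoint M = (2 * Complex.I) • (K₂ ∘L J ∘L adjoint K₂))
    (Mhat : WithLp 2 (H₁ × H₂) →L[ℂ] WithLp 2 (H₁ × H₂))
    (hMhat : ∀ (x₁ : H₁) (x₂ : H₂),
      Mhat ((WithLp.equiv 2 (H₁ × H₂)).symm (x₁, x₂)) =
        (WithLp.equiv 2 (H₁ × H₂)).symm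
          (A x₁ + (2 * Complex.I) • K₁ (J (adjoint K₂ x₂)), M x₂))
    (K : E →L[ℂ] WithLp 2 (H₁ × H₂))
    (hK : ∀ e : E, K e = (WithLp.equiv 2 (H₁ × H₂)).symm (K₁ e, K₂ e)) :
    Mhat - adjoint Mhat = (2 * Complex.I) • (K ∘L J ∘L adjoint K) := by
  have hKadj : ∀ x : WithLp 2 (H₁ × H₂),
      adjoint K x = adjoint K₁ x.fst + adjoint K₂ x.snd := by
    intro x
    apply ext_inner_left ℂ
    intro e
    rw [adjoint_inner_right, hK, inner_add_right, adjoint_inner_right, adjoint_inner_right,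
      WithLp.prod_inner_apply]
    simp only [WithLp.equiv_symm_apply, WithLp.ofLp_toLp, WithLp.ofLp_fst, WithLp.ofLp_snd]
  have hMadj : ∀ x : WithLp 2 (H₁ × H₂),
      adjoint Mhat x = (WithLp.equiv 2 (H₁ × H₂)).symm
        (adjoint A x.fst, (-(2 * Complex.I)) • K₂ (J (adjoint K₁ x.fst)) + adjoint M x.snd) := by
    intro x
    apply ext_inner_left ℂ
    intro v
    rw [adjoint_inner_right]
    have hv : Mhat v = (WithLp.equiv 2 (H₁ × H₂)).symm
        (A v.fst + (2 * Complex.I) • K₁ (J (adjoint K₂ v.snd)), M v.snd) := hMhat v.fst v.snd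
    rw [hv, WithLp.prod_inner_apply, WithLp.prod_inner_apply]
    simp only [WithLp.equiv_symm_apply, WithLp.ofLp_toLp, WithLp.ofLp_fst, WithLp.ofLp_snd]
    simp only [inner_add_left, inner_add_right, inner_smul_left, inner_smul_right,
      inner_neg_right]
    rw [← adjoint_inner_right A, ← adjoint_inner_right M, ← adjoint_inner_right K₁]
    conv_lhs => rw [← hJsa]
    rw [adjoint_inner_left J, adjoint_inner_left K₂]
    simp only [map_mul, Complex.conj_I, map_ofNat]
    ring
  ext x
  have h1 := DFunLike.congr_fun hA x.fst
  have h2 := DFunLike.congr_fun hM x.snd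
  simp only [sub_apply, smul_apply, comp_apply, coe_comp', Function.comp_apply] at h1 h2 ⊢
  rw [hMadj, hKadj]
  have hx : Mhat x = (WithLp.equiv 2 (H₁ × H₂)).symm
      (A x.fst + (2 * Complex.I) • K₁ (J (adjoint K₂ x.snd)), M x.snd) := hMhat x.fst x.snd
  rw [hx, hK]
  rw [WithLp.equiv_symm_apply, ← WithLp.toLp_sub, ← WithLp.toLp_smul]
  apply congrArg
  rw [Prod.mk_sub_mk, Prod.smul_mk, Prod.mk.injEq]
  constructor
  · rw [map_add, map_add, smul_add]
    rw [add_sub_right_comm, h1]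
  · rw [map_add, map_add, smul_add]
    rw [sub_add_eq_sub_sub, neg_smul, sub_neg_eq_add, add_sub_right_comm, h2, add_comm]
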